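/- Let ρ = q₁P_{φ+} + q₂P_{φ−} + q₃P_{ψ+} + q₄P_{ψ−} be a Bell-diagonal state on ℂ² ⊗ ℂ², and let t_{ii} = tr((σ_i ⊗ σ_i) ρ) for i = 1,2,3 (the Pauli matrices). Then the minimum, over all product orthonormal bases {e_i ⊗ f_j : i,j = 1,2} of ℂ² ⊗ ℂ² (with {e_1,e_2} and {f_1,f_2} orthonormal bases of the two qubits), of the Shannon entropy of the outcome distribution p_{ij} = ⟨e_i ⊗ f_j, ρ (e_i ⊗ f_j)⟩ equals 1 + h(p_max), where p_max = (1 + max_i |t_{ii}|)/2. -/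

import Mathlib

open Matrix
open scoped Kronecker ComplexOrder

/-- binary entropy (base 2). -/
noncomputable def binEnt (p : ℝ) : ℝ :=
  -(p * Real.logb 2 p) - (1 - p) * Real.logb 2 (1 - p)

/-- The four Bell state vectors in ℂ² ⊗ ℂ²: `φ⁺, φ⁻, ψ⁺, ψ⁻`. -/
noncomputable def bellVec : Fin 4 → (Fin 2 × Fin 2 → ℂ)
  | 0 => fun x => if x = (0, 0) then (1 / Real.sqrt 2 : ℝ)
      else if x = (1, 1) then (1 / Real.sqrt 2 : ℝ) else 0
  | 1 => fun x => if x = (0, 0) then (1 / Real.sqrt 2 : ℝ)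
      else if x = (1, 1) then -(1 / Real.sqrt 2 : ℝ) else 0
  | 2 => fun x => if x = (0, 1) then (1 / Real.sqrt 2 : ℝ)
      else if x = (1, 0) then (1 / Real.sqrt 2 : ℝ) else 0
  | 3 => fun x => if x = (0, 1) then (1 / Real.sqrt 2 : ℝ)
      else if x = (1, 0) then -(1 / Real.sqrt 2 : ℝ) else 0

/-- The Pauli matrices σ₁, σ₂, σ₃. -/
noncomputable def pauli : Fin 3 → Matrix (Fin 2) (Fin 2) ℂ
  | 0 => !![0, 1; 1, 0]
  | 1 => !![0, -Complex.I; Complex.I, 0]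
  | 2 => !![1, 0; 0, -1]

/- ========= auxiliary lemmas ========= -/

lemma binEnt_eq (p : ℝ) : binEnt p = Real.binEntropy p / Real.log 2 := by
  simp [binEnt, Real.binEntropy, Real.logb, Real.log_inv]
  ring

lemma binEnt_symm (p : ℝ) : binEnt (1 - p) = binEnt p := by
  rw [binEnt_eq, binEnt_eq, Real.binEntropy_one_sub]

lemma entMono {c T : ℝ} (h1 : |c| ≤ T) (h2 : T ≤ 1) :
    binEnt ((1 + T) / 2) ≤ binEnt ((1 + c) / 2) := by
  have habs : binEnt ((1 + c)/2) = binEnt ((1 + |c|)/2) := by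
    rcases abs_cases c with ⟨h, _⟩ | ⟨h, _⟩
    · rw [h]
    · rw [h, show (1 + -c)/2 = 1 - (1+c)/2 by ring, binEnt_symm]
  have hT0 : 0 ≤ T := le_trans (abs_nonneg c) h1
  rw [habs, binEnt_eq, binEnt_eq]
  have hmem1 : (1 + |c|)/2 ∈ Set.Icc (2⁻¹ : ℝ) 1 := by
    constructor <;> nlinarith [abs_nonneg c, h1]
  have hmem2 : (1 + T)/2 ∈ Set.Icc (2⁻¹ : ℝ) 1 := by
    constructor <;> nlinarith
  have h := Real.binEntropy_strictAntiOn.antitoneOn hmem1 hmem2 (by linarith)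
  have hl : (0:ℝ) < Real.log 2 := Real.log_pos (by norm_num)
  gcongr

lemma entVal {c : ℝ} (h1 : -1 ≤ c) (h2 : c ≤ 1) :
    -(2 * ((1+c)/4 * Real.logb 2 ((1+c)/4)) + 2 * ((1-c)/4 * Real.logb 2 ((1-c)/4)))
      = 1 + binEnt ((1+c)/2) := by
  have l4 : Real.logb 2 4 = 2 := by
    rw [show (4:ℝ) = 2*2 by norm_num, Real.logb_mul (by norm_num) (by norm_num),
      Real.logb_self_eq_one (by norm_num : (1:ℝ) < 2)]
    norm_num
  have l2 : Real.logb 2 2 = 1 := by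
    exact Real.logb_self_eq_one (by norm_num)
  have lhalf : Real.logb 2 (1/2 : ℝ) = -1 := by
    rw [show (1/2:ℝ) = 2⁻¹ by norm_num, Real.logb_inv, l2]
  rcases eq_or_lt_of_le h2 with rfl | h2'
  · norm_num [binEnt, l2, lhalf]
  rcases eq_or_lt_of_le h1 with h | h1'
  · rw [← h]; norm_num [binEnt, l2, lhalf]
  have hp : (0:ℝ) < 1 + c := by linarith
  have hm : (0:ℝ) < 1 - c := by linarith
  have e1 : Real.logb 2 ((1+c)/4) = Real.logb 2 (1+c) - 2 := by
    rw [Real.logb_div (by positivity) (by norm_num), l4]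
  have e2 : Real.logb 2 ((1-c)/4) = Real.logb 2 (1-c) - 2 := by
    rw [Real.logb_div (by positivity) (by norm_num), l4]
  have e3 : Real.logb 2 ((1+c)/2) = Real.logb 2 (1+c) - 1 := by
    rw [Real.logb_div (by positivity) (by norm_num), l2]
  have e4 : Real.logb 2 (1 - (1+c)/2) = Real.logb 2 (1-c) - 1 := by
    rw [show 1 - (1+c)/2 = (1-c)/2 by ring,
      Real.logb_div (by positivity) (by norm_num), l2]
  rw [binEnt, e1, e2, e3, e4]
  ring

lemma Cbound {t0 t1 t2 A0 A1 A2 B0 B1 B2 T : ℝ}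
    (hA : A0^2+A1^2+A2^2 = 1) (hB : B0^2+B1^2+B2^2 = 1)
    (h0 : |t0| ≤ T) (h1 : |t1| ≤ T) (h2 : |t2| ≤ T) :
    |t0*A0*B0 + t1*A1*B1 + t2*A2*B2| ≤ T := by
  rw [abs_le] at *
  obtain ⟨h0a, h0b⟩ := h0; obtain ⟨h1a, h1b⟩ := h1; obtain ⟨h2a, h2b⟩ := h2
  constructor <;>
    nlinarith [sq_nonneg (A0+B0), sq_nonneg (A0-B0), sq_nonneg (A1+B1), sq_nonneg (A1-B1),
      sq_nonneg (A2+B2), sq_nonneg (A2-B2),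
      mul_nonneg (by linarith : (0:ℝ) ≤ T - t0) (sq_nonneg (A0+B0)),
      mul_nonneg (by linarith : (0:ℝ) ≤ T + t0) (sq_nonneg (A0-B0)),
      mul_nonneg (by linarith : (0:ℝ) ≤ T - t1) (sq_nonneg (A1+B1)),
      mul_nonneg (by linarith : (0:ℝ) ≤ T + t1) (sq_nonneg (A1-B1)),
      mul_nonneg (by linarith : (0:ℝ) ≤ T - t2) (sq_nonneg (A2+B2)),
      mul_nonneg (by linarith : (0:ℝ) ≤ T + t2) (sq_nonneg (A2-B2))]

/-- The Bell-diagonal density matrix with given correlation coefficients. -/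
noncomputable def bellM (a b c : ℝ) : Matrix (Fin 2 × Fin 2) (Fin 2 × Fin 2) ℂ :=
  (1/4 : ℂ) • ((1 : Matrix (Fin 2 × Fin 2) (Fin 2 × Fin 2) ℂ)
      + (a : ℂ) • (pauli 0 ⊗ₖ pauli 0)
      + (b : ℂ) • (pauli 1 ⊗ₖ pauli 1)
      + (c : ℂ) • (pauli 2 ⊗ₖ pauli 2))

lemma decomp (q : Fin 4 → ℝ) (hqsum : ∑ i, q i = 1) :
    ∑ i, (q i : ℂ) • vecMulVec (bellVec i) (star (bellVec i)) =
    bellM (q 0 - q 1 + q 2 - q 3) (- q 0 + q 1 + q 2 - q 3) (q 0 + q 1 - q 2 - q 3) := by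
  have hq4 : ((q 0 : ℂ) + q 1 + q 2 + q 3) = 1 := by
    have := hqsum
    rw [Fin.sum_univ_four] at this
    exact_mod_cast congrArg (Complex.ofReal) this
  have h2 : ((Real.sqrt 2 : ℝ) : ℂ)⁻¹ * ((Real.sqrt 2 : ℝ) : ℂ)⁻¹ = 1/2 := by
    have hr : (Real.sqrt 2)⁻¹ * (Real.sqrt 2)⁻¹ = 1/2 := by
      rw [← mul_inv, Real.mul_self_sqrt (by norm_num)]
      norm_num
    rw [← Complex.ofReal_inv, ← Complex.ofReal_mul, hr]
    norm_num
  have h2' : ((Real.sqrt 2 : ℝ) : ℂ)⁻¹ ^ 2 = 1/2 := by rw [sq]; exact h2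
  rw [bellM]
  ext ⟨x, y⟩ ⟨x', y'⟩
  fin_cases x <;> fin_cases y <;> fin_cases x' <;> fin_cases y' <;>
    simp [bellVec, pauli, Fin.sum_univ_four, vecMulVec_apply, kroneckerMap_apply,
      Matrix.one_apply, Complex.conj_ofReal, Prod.mk.injEq, one_div,
      ← Prod.mk_zero_zero, ← Prod.mk_one_one] <;>
    (ring_nf; try simp only [h2']) <;>
    first
      | linear_combination (1/4 : ℂ) * hq4
      | ring

set_option maxHeartbeats 1600000 in
lemma traceK (a b c : ℝ) :
    ∀ i : Fin 3, (((pauli i ⊗ₖ pauli i) * bellM a b c).trace).re = ![a, b, c] i := by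
  intro i
  rw [bellM]
  fin_cases i <;>
    simp [Matrix.trace, Matrix.diag, Matrix.mul_apply, Fintype.sum_prod_type,
      Fin.sum_univ_two, pauli, kroneckerMap_apply, Matrix.one_apply, Prod.mk.injEq,
      Complex.ext_iff] <;>
    ring

set_option maxHeartbeats 1600000 in
lemma QF (a b c : ℝ) (e f : Fin 2 → ℂ) :
    star (fun x : Fin 2 × Fin 2 => e x.1 * f x.2) ⬝ᵥ
      ((bellM a b c) *ᵥ (fun x : Fin 2 × Fin 2 => e x.1 * f x.2))
    = (1/4 : ℂ) * ((star e ⬝ᵥ e) * (star f ⬝ᵥ f)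
        + a * ((star e ⬝ᵥ (pauli 0 *ᵥ e)) * (star f ⬝ᵥ (pauli 0 *ᵥ f)))
        + b * ((star e ⬝ᵥ (pauli 1 *ᵥ e)) * (star f ⬝ᵥ (pauli 1 *ᵥ f)))
        + c * ((star e ⬝ᵥ (pauli 2 *ᵥ e)) * (star f ⬝ᵥ (pauli 2 *ᵥ f)))) := by
  rw [bellM]
  simp [dotProduct, Matrix.mulVec, Fintype.sum_prod_type, Fin.sum_univ_two, pauli,
    kroneckerMap_apply, Matrix.one_apply, Prod.mk.injEq, Pi.star_apply, star_mul',
    Matrix.smul_apply, Matrix.add_apply]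
  ring_nf
  simp only [Complex.I_sq]
  ring

lemma bloch_real (k : Fin 3) (v : Fin 2 → ℂ) :
    star v ⬝ᵥ (pauli k *ᵥ v) = (((star v ⬝ᵥ (pauli k *ᵥ v)).re : ℝ) : ℂ) := by
  fin_cases k <;>
    simp [dotProduct, Matrix.mulVec, pauli, Fin.sum_univ_two, Complex.ext_iff,
      Complex.mul_re, Complex.mul_im] <;> ring

/-- Bloch coefficient. -/
noncomputable def bl (v : Fin 2 → ℂ) (k : Fin 3) : ℝ := (star v ⬝ᵥ (pauli k *ᵥ v)).re

lemma bloch_norm (v : Fin 2 → ℂ) (hv : star v ⬝ᵥ v = 1) :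
    (bl v 0) ^ 2 + (bl v 1) ^ 2 + (bl v 2) ^ 2 = 1 := by
  have h : (v 0).re ^ 2 + (v 0).im ^ 2 + (v 1).re ^ 2 + (v 1).im ^ 2 = 1 := by
    have := congrArg Complex.re hv
    simp [dotProduct, Fin.sum_univ_two, Complex.mul_re] at this
    nlinarith [this]
  simp only [bl]
  simp [dotProduct, Matrix.mulVec, pauli, Fin.sum_univ_two, Complex.mul_re, Complex.mul_im]
  nlinarith [h]

lemma colrel (e : Fin 2 → (Fin 2 → ℂ))
    (he : ∀ i j, star (e i) ⬝ᵥ e j = if i = j then 1 else 0) (x y : Fin 2) :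
    (starRingEnd ℂ) (e 0 x) * (e 0 y) + (starRingEnd ℂ) (e 1 x) * (e 1 y)
      = if x = y then 1 else 0 := by
  set M : Matrix (Fin 2) (Fin 2) ℂ := Matrix.of (fun i x => e i x) with hM
  have h1 : M * Mᴴ = 1 := by
    ext i j
    have h := he j i
    simp only [dotProduct, Pi.star_apply, Fin.sum_univ_two] at h
    simp only [Matrix.mul_apply, Matrix.conjTranspose_apply, Fin.sum_univ_two, hM,
      Matrix.of_apply, Matrix.one_apply]
    rw [show ((if i = j then (1:ℂ) else 0) = if j = i then 1 else 0) by
      by_cases hij : i = j <;> simp [hij, eq_comm], ← h]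
    ring
  have h2 : Mᴴ * M = 1 := mul_eq_one_comm.mp h1
  have := congrFun (congrFun h2 x) y
  simp [Matrix.mul_apply, Matrix.conjTranspose_apply, Fin.sum_univ_two, hM,
    Matrix.one_apply] at this
  simpa [Matrix.one_apply] using this

lemma bloch_flip (e : Fin 2 → (Fin 2 → ℂ))
    (he : ∀ i j, star (e i) ⬝ᵥ e j = if i = j then 1 else 0) (k : Fin 3) :
    star (e 1) ⬝ᵥ (pauli k *ᵥ e 1) = - (star (e 0) ⬝ᵥ (pauli k *ᵥ e 0)) := by
  have c00 := colrel e he 0 0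
  have c11 := colrel e he 1 1
  have c01 := colrel e he 0 1
  have c01' := congrArg (starRingEnd ℂ) c01
  simp only [map_add, _root_.map_mul, Complex.conj_conj, _root_.map_one,
    _root_.map_zero] at c00 c11 c01 c01'
  norm_num at c00 c11 c01 c01'
  fin_cases k <;>
    simp [dotProduct, Matrix.mulVec, pauli, Fin.sum_univ_two] <;>
    [linear_combination c01 + c01'; linear_combination Complex.I * c01' - Complex.I * c01;
     linear_combination c00 - c11]

noncomputable def sg : Fin 2 → ℝ := ![1, -1]

lemma bloch_sgn (e : Fin 2 → (Fin 2 → ℂ))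
    (he : ∀ i j, star (e i) ⬝ᵥ e j = if i = j then 1 else 0) (k : Fin 3) (i : Fin 2) :
    star (e i) ⬝ᵥ (pauli k *ᵥ e i)
      = (((sg i * (star (e 0) ⬝ᵥ (pauli k *ᵥ e 0)).re : ℝ)) : ℂ) := by
  fin_cases i
  · simp only [sg, Fin.zero_eta, Matrix.cons_val_zero, one_mul]
    exact bloch_real k (e 0)
  · rw [show (⟨1, by norm_num⟩ : Fin 2) = (1 : Fin 2) from rfl, bloch_flip e he k,
      bloch_real k (e 0)]
    simp [sg, Complex.ofReal_re]

lemma pval (a b c : ℝ) (e f : Fin 2 → (Fin 2 → ℂ))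
    (he : ∀ i j, star (e i) ⬝ᵥ e j = if i = j then 1 else 0)
    (hf : ∀ i j, star (f i) ⬝ᵥ f j = if i = j then 1 else 0) (i j : Fin 2) :
    star (fun x : Fin 2 × Fin 2 => e i x.1 * f j x.2) ⬝ᵥ
      ((bellM a b c) *ᵥ (fun x : Fin 2 × Fin 2 => e i x.1 * f j x.2))
    = ((((1 + sg i * sg j *
          (a * bl (e 0) 0 * bl (f 0) 0
         + b * bl (e 0) 1 * bl (f 0) 1
         + c * bl (e 0) 2 * bl (f 0) 2)) / 4 : ℝ)) : ℂ) := by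
  rw [QF]
  have hee := he i i
  have hff := hf j j
  simp only [if_pos rfl] at hee hff
  rw [hee, hff, bloch_sgn e he 0 i, bloch_sgn e he 1 i, bloch_sgn e he 2 i,
    bloch_sgn f hf 0 j, bloch_sgn f hf 1 j, bloch_sgn f hf 2 j]
  simp only [bl]
  push_cast
  ring

/-- Eigenbasis of pauli k. -/
noncomputable def evec : Fin 3 → Fin 2 → (Fin 2 → ℂ)
  | 0 => ![![(Real.sqrt 2 : ℝ)⁻¹, (Real.sqrt 2 : ℝ)⁻¹], ![(Real.sqrt 2 : ℝ)⁻¹, -(Real.sqrt 2 : ℝ)⁻¹]]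
  | 1 => ![![(Real.sqrt 2 : ℝ)⁻¹, (Real.sqrt 2 : ℝ)⁻¹ * Complex.I],
          ![(Real.sqrt 2 : ℝ)⁻¹, -((Real.sqrt 2 : ℝ)⁻¹ * Complex.I)]]
  | 2 => ![![1, 0], ![0, 1]]

lemma evec_onb (k : Fin 3) : ∀ i j, star (evec k i) ⬝ᵥ evec k j = if i = j then 1 else 0 := by
  have h2 : ((Real.sqrt 2 : ℝ) : ℂ)⁻¹ * ((Real.sqrt 2 : ℝ) : ℂ)⁻¹ = 1/2 := by
    have hr : (Real.sqrt 2)⁻¹ * (Real.sqrt 2)⁻¹ = 1/2 := by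
      rw [← mul_inv, Real.mul_self_sqrt (by norm_num)]; norm_num
    rw [← Complex.ofReal_inv, ← Complex.ofReal_mul, hr]; norm_num
  intro i j
  fin_cases k <;> fin_cases i <;> fin_cases j <;>
    simp [evec, dotProduct, Fin.sum_univ_two, Complex.conj_ofReal, mul_comm] <;>
    (ring_nf; try simp only [Complex.I_sq]) <;>
    first
      | linear_combination 2 * h2
      | linear_combination (-2 : ℂ) * h2
      | ring

lemma evec_bloch (k j : Fin 3) :
    bl (evec k 0) j = if j = k then 1 else 0 := by
  have hr : (Real.sqrt 2)⁻¹ * (Real.sqrt 2)⁻¹ = 1/2 := by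
    rw [← mul_inv, Real.mul_self_sqrt (by norm_num)]; norm_num
  rw [bl]
  fin_cases k <;> fin_cases j <;>
    simp [evec, pauli, dotProduct, Matrix.mulVec, Fin.sum_univ_two, Complex.mul_re,
      Complex.mul_im, Complex.conj_ofReal] <;>
    nlinarith [Real.sq_sqrt (show (0:ℝ) ≤ 2 by norm_num), hr]

noncomputable def fswap (e : Fin 2 → (Fin 2 → ℂ)) : Fin 2 → (Fin 2 → ℂ) := ![e 1, e 0]

lemma fswap_onb (e : Fin 2 → (Fin 2 → ℂ))
    (he : ∀ i j, star (e i) ⬝ᵥ e j = if i = j then 1 else 0) :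
    ∀ i j, star (fswap e i) ⬝ᵥ fswap e j = if i = j then 1 else 0 := by
  intro i j
  fin_cases i <;> fin_cases j
  · simpa [fswap] using he 1 1
  · simpa [fswap] using he 1 0
  · simpa [fswap] using he 0 1
  · simpa [fswap] using he 0 0

lemma bl_fswap (e : Fin 2 → (Fin 2 → ℂ))
    (he : ∀ i j, star (e i) ⬝ᵥ e j = if i = j then 1 else 0) (k : Fin 3) :
    bl (fswap e 0) k = - bl (e 0) k := by
  show (star (e 1) ⬝ᵥ (pauli k *ᵥ e 1)).re = _
  rw [bloch_flip e he k]
  simp [bl]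

/-- correlation along chosen bases -/
noncomputable def corr (t : Fin 3 → ℝ) (e f : Fin 2 → (Fin 2 → ℂ)) : ℝ :=
  t 0 * bl (e 0) 0 * bl (f 0) 0 + t 1 * bl (e 0) 1 * bl (f 0) 1 + t 2 * bl (e 0) 2 * bl (f 0) 2

lemma sum_ent (t : Fin 3 → ℝ) (ρ : Matrix (Fin 2 × Fin 2) (Fin 2 × Fin 2) ℂ)
    (hρ' : ρ = bellM (t 0) (t 1) (t 2)) (htb : ∀ k, |t k| ≤ 1)
    (e f : Fin 2 → (Fin 2 → ℂ))
    (he : ∀ i j, star (e i) ⬝ᵥ e j = if i = j then 1 else 0)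
    (hf : ∀ i j, star (f i) ⬝ᵥ f j = if i = j then 1 else 0) :
    -∑ i, ∑ j,
          ((star (fun x : Fin 2 × Fin 2 => e i x.1 * f j x.2) ⬝ᵥ
              (ρ *ᵥ fun x : Fin 2 × Fin 2 => e i x.1 * f j x.2)).re) *
            Real.logb 2 ((star (fun x : Fin 2 × Fin 2 => e i x.1 * f j x.2) ⬝ᵥ
              (ρ *ᵥ fun x : Fin 2 × Fin 2 => e i x.1 * f j x.2)).re)
      = 1 + binEnt ((1 + corr t e f) / 2) := by
  have he00 : star (e 0) ⬝ᵥ e 0 = 1 := by simpa using he 0 0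
  have hf00 : star (f 0) ⬝ᵥ f 0 = 1 := by simpa using hf 0 0
  have hCb : |corr t e f| ≤ 1 := by
    rw [corr]
    exact Cbound (bloch_norm (e 0) he00) (bloch_norm (f 0) hf00) (htb 0) (htb 1) (htb 2)
  set C := corr t e f with hC
  have hP : ∀ i j : Fin 2, (star (fun x : Fin 2 × Fin 2 => e i x.1 * f j x.2) ⬝ᵥ
      (ρ *ᵥ fun x : Fin 2 × Fin 2 => e i x.1 * f j x.2)).re = (1 + sg i * sg j * C) / 4 := by
    intro i j
    rw [hρ', pval (t 0) (t 1) (t 2) e f he hf i j]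
    rw [Complex.ofReal_re, hC, corr]
  simp only [Fin.sum_univ_two, hP]
  have hs00 : (1 + sg 0 * sg 0 * C) / 4 = (1 + C) / 4 := by norm_num [sg]
  have hs01 : (1 + sg 0 * sg 1 * C) / 4 = (1 - C) / 4 := by norm_num [sg]; ring
  have hs10 : (1 + sg 1 * sg 0 * C) / 4 = (1 - C) / 4 := by norm_num [sg]; ring
  have hs11 : (1 + sg 1 * sg 1 * C) / 4 = (1 + C) / 4 := by norm_num [sg]
  rw [hs00, hs01, hs10, hs11]
  have h1 : -1 ≤ C := by cases abs_le.mp hCb; assumption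
  have h2 : C ≤ 1 := by cases abs_le.mp hCb; assumption
  have := entVal h1 h2
  linarith

lemma corr_bound (t : Fin 3 → ℝ) (e f : Fin 2 → (Fin 2 → ℂ))
    (he : ∀ i j, star (e i) ⬝ᵥ e j = if i = j then 1 else 0)
    (hf : ∀ i j, star (f i) ⬝ᵥ f j = if i = j then 1 else 0) :
    |corr t e f| ≤ max (|t 0|) (max (|t 1|) (|t 2|)) := by
  have he00 : star (e 0) ⬝ᵥ e 0 = 1 := by simpa using he 0 0
  have hf00 : star (f 0) ⬝ᵥ f 0 = 1 := by simpa using hf 0 0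
  rw [corr]
  exact Cbound (bloch_norm (e 0) he00) (bloch_norm (f 0) hf00)
    (le_max_left _ _)
    (le_trans (le_max_left _ _) (le_max_right _ _))
    (le_trans (le_max_right _ _) (le_max_right _ _))

lemma fin3_ne : ((0:Fin 3) ≠ 1) ∧ ((0:Fin 3) ≠ 2) ∧ ((1:Fin 3) ≠ 0) ∧ ((1:Fin 3) ≠ 2)
    ∧ ((2:Fin 3) ≠ 0) ∧ ((2:Fin 3) ≠ 1) := by decide

lemma corr_evec (t : Fin 3 → ℝ) : ∀ k, corr t (evec k) (evec k) = t k
  | 0 => by norm_num [corr, evec_bloch, fin3_ne.1, fin3_ne.2.1, fin3_ne.2.2.1, fin3_ne.2.2.2.1, fin3_ne.2.2.2.2.1, fin3_ne.2.2.2.2.2]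
  | 1 => by norm_num [corr, evec_bloch, fin3_ne.1, fin3_ne.2.1, fin3_ne.2.2.1, fin3_ne.2.2.2.1, fin3_ne.2.2.2.2.1, fin3_ne.2.2.2.2.2]
  | 2 => by norm_num [corr, evec_bloch, fin3_ne.1, fin3_ne.2.1, fin3_ne.2.2.1, fin3_ne.2.2.2.1, fin3_ne.2.2.2.2.1, fin3_ne.2.2.2.2.2]

lemma corr_evec_swap (t : Fin 3 → ℝ) : ∀ k, corr t (evec k) (fswap (evec k)) = - t k
  | 0 => by norm_num [corr, bl_fswap (evec 0) (evec_onb 0), evec_bloch, fin3_ne.1, fin3_ne.2.1, fin3_ne.2.2.1, fin3_ne.2.2.2.1, fin3_ne.2.2.2.2.1, fin3_ne.2.2.2.2.2]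
  | 1 => by norm_num [corr, bl_fswap (evec 1) (evec_onb 1), evec_bloch, fin3_ne.1, fin3_ne.2.1, fin3_ne.2.2.1, fin3_ne.2.2.2.1, fin3_ne.2.2.2.2.1, fin3_ne.2.2.2.2.2]
  | 2 => by norm_num [corr, bl_fswap (evec 2) (evec_onb 2), evec_bloch, fin3_ne.1, fin3_ne.2.1, fin3_ne.2.2.1, fin3_ne.2.2.2.1, fin3_ne.2.2.2.2.1, fin3_ne.2.2.2.2.2]

/-- For a Bell-diagonal state ρ with correlation coefficients
`t_i = tr((σ_i ⊗ σ_i) ρ)`, the minimum over product orthonormal bases of the Shannon entropy of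
the outcome distribution `p_{ij} = ⟨e_i ⊗ f_j, ρ (e_i ⊗ f_j)⟩` equals `1 + h(p_max)` with
`p_max = (1 + max_i |t_i|)/2`. -/
theorem min_shannon_entropy_product_basis_bell_diagonal
    (q : Fin 4 → ℝ) (hq : ∀ i, 0 ≤ q i) (hqsum : ∑ i, q i = 1)
    (ρ : Matrix (Fin 2 × Fin 2) (Fin 2 × Fin 2) ℂ)
    (hρ : ρ = ∑ i, (q i : ℂ) • vecMulVec (bellVec i) (star (bellVec i)))
    (t : Fin 3 → ℝ)
    (ht : ∀ i, t i = (((pauli i ⊗ₖ pauli i) * ρ).trace).re) :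
    sInf {r : ℝ | ∃ (e f : Fin 2 → (Fin 2 → ℂ)),
        (∀ i j, star (e i) ⬝ᵥ e j = if i = j then 1 else 0) ∧
        (∀ i j, star (f i) ⬝ᵥ f j = if i = j then 1 else 0) ∧
        r = -∑ i, ∑ j,
          ((star (fun x : Fin 2 × Fin 2 => e i x.1 * f j x.2) ⬝ᵥ
              (ρ *ᵥ fun x : Fin 2 × Fin 2 => e i x.1 * f j x.2)).re) *
            Real.logb 2 ((star (fun x : Fin 2 × Fin 2 => e i x.1 * f j x.2) ⬝ᵥ
              (ρ *ᵥ fun x : Fin 2 × Fin 2 => e i x.1 * f j x.2)).re)}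
      = 1 + binEnt ((1 + max (|t 0|) (max (|t 1|) (|t 2|))) / 2) := by
  have hdec : ρ = bellM (q 0 - q 1 + q 2 - q 3) (- q 0 + q 1 + q 2 - q 3)
      (q 0 + q 1 - q 2 - q 3) := hρ.trans (decomp q hqsum)
  have ht0 : t 0 = q 0 - q 1 + q 2 - q 3 := by
    rw [ht 0, hdec]; simpa using traceK (q 0 - q 1 + q 2 - q 3) (- q 0 + q 1 + q 2 - q 3) (q 0 + q 1 - q 2 - q 3) 0
  have ht1 : t 1 = - q 0 + q 1 + q 2 - q 3 := by
    rw [ht 1, hdec]; simpa using traceK (q 0 - q 1 + q 2 - q 3) (- q 0 + q 1 + q 2 - q 3) (q 0 + q 1 - q 2 - q 3) 1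
  have ht2 : t 2 = q 0 + q 1 - q 2 - q 3 := by
    rw [ht 2, hdec]; simpa using traceK (q 0 - q 1 + q 2 - q 3) (- q 0 + q 1 + q 2 - q 3) (q 0 + q 1 - q 2 - q 3) 2
  have hρ' : ρ = bellM (t 0) (t 1) (t 2) := by rw [hdec, ht0, ht1, ht2]
  have hq4 := hqsum
  rw [Fin.sum_univ_four] at hq4
  have hb0 : |t 0| ≤ 1 := by
    rw [ht0, abs_le]; constructor <;> nlinarith [hq 0, hq 1, hq 2, hq 3]
  have hb1 : |t 1| ≤ 1 := by
    rw [ht1, abs_le]; constructor <;> nlinarith [hq 0, hq 1, hq 2, hq 3]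
  have hb2 : |t 2| ≤ 1 := by
    rw [ht2, abs_le]; constructor <;> nlinarith [hq 0, hq 1, hq 2, hq 3]
  have htb : ∀ k : Fin 3, |t k| ≤ 1 := fun k => match k with
    | 0 => hb0
    | 1 => hb1
    | 2 => hb2
  set T := max (|t 0|) (max (|t 1|) (|t 2|)) with hT
  have hTle1 : T ≤ 1 := max_le hb0 (max_le hb1 hb2)
  have hTk : ∃ k : Fin 3, |t k| = T := by
    rcases le_total (|t 0|) (max (|t 1|) (|t 2|)) with h | h
    · rcases le_total (|t 1|) (|t 2|) with h' | h'
      · exact ⟨2, by rw [hT, max_eq_right h, max_eq_right h']⟩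
      · exact ⟨1, by rw [hT, max_eq_right h, max_eq_left h']⟩
    · exact ⟨0, by rw [hT, max_eq_left h]⟩
  obtain ⟨k, hk⟩ := hTk
  have mem : (1 + binEnt ((1 + T)/2)) ∈ {r : ℝ | ∃ (e f : Fin 2 → (Fin 2 → ℂ)),
      (∀ i j, star (e i) ⬝ᵥ e j = if i = j then 1 else 0) ∧
      (∀ i j, star (f i) ⬝ᵥ f j = if i = j then 1 else 0) ∧
      r = -∑ i, ∑ j,
        ((star (fun x : Fin 2 × Fin 2 => e i x.1 * f j x.2) ⬝ᵥ
            (ρ *ᵥ fun x : Fin 2 × Fin 2 => e i x.1 * f j x.2)).re) *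
          Real.logb 2 ((star (fun x : Fin 2 × Fin 2 => e i x.1 * f j x.2) ⬝ᵥ
            (ρ *ᵥ fun x : Fin 2 × Fin 2 => e i x.1 * f j x.2)).re)} := by
    rcases le_or_gt 0 (t k) with hpos | hneg
    · refine ⟨evec k, evec k, evec_onb k, evec_onb k, ?_⟩
      rw [sum_ent t ρ hρ' htb (evec k) (evec k) (evec_onb k) (evec_onb k),
        corr_evec t k, ← hk, abs_of_nonneg hpos]
    · refine ⟨evec k, fswap (evec k), evec_onb k, fswap_onb (evec k) (evec_onb k), ?_⟩
      rw [sum_ent t ρ hρ' htb (evec k) (fswap (evec k)) (evec_onb k)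
          (fswap_onb (evec k) (evec_onb k)),
        corr_evec_swap t k, ← hk, abs_of_neg hneg]
  have lb : ∀ r ∈ {r : ℝ | ∃ (e f : Fin 2 → (Fin 2 → ℂ)),
      (∀ i j, star (e i) ⬝ᵥ e j = if i = j then 1 else 0) ∧
      (∀ i j, star (f i) ⬝ᵥ f j = if i = j then 1 else 0) ∧
      r = -∑ i, ∑ j,
        ((star (fun x : Fin 2 × Fin 2 => e i x.1 * f j x.2) ⬝ᵥ
            (ρ *ᵥ fun x : Fin 2 × Fin 2 => e i x.1 * f j x.2)).re) *
          Real.logb 2 ((star (fun x : Fin 2 × Fin 2 => e i x.1 * f j x.2) ⬝ᵥ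
            (ρ *ᵥ fun x : Fin 2 × Fin 2 => e i x.1 * f j x.2)).re)},
      1 + binEnt ((1 + T)/2) ≤ r := by
    rintro r ⟨e, f, he, hf, rfl⟩
    rw [sum_ent t ρ hρ' htb e f he hf]
    have h := entMono (corr_bound t e f he hf) hTle1
    linarith
  exact le_antisymm (csInf_le ⟨_, fun r hr => lb r hr⟩ mem) (le_csInf ⟨_, mem⟩ lb)
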